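/- Let R be lower triangular with unit diagonal. Then γ(H_n[R]) = Σ_{S⊆[n-1], S∪{0} stable} det(R[S∪{n}, {0}∪S]) · t^{|S|}, where R[C,D] denotes the submatrix of R with rows C and columns D. In particular, if R is totally nonnegative, then the γ-polynomial of H_n[R] has nonnegative coefficients. -/

import Mathlib

open Polynomial

/-- `d`, `H` are the Chow-derangement and Chow polynomials of the lower triangular
matrix `r` with unit diagonal (up to index `N`). -/
def ChowFamily (N : ℕ) (r : ℕ → ℕ → ℝ) (d H : ℕ → ℝ[X]) : Prop :=
  d 0 = 1 ∧
  (∀ n ≤ N, (d n).natDegree ≤ n) ∧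
  (∀ n ≤ N, reflect n (d n) = d n) ∧
  (∀ n ≤ N, H n = ∑ k ∈ Finset.range (n + 1), C (r n k) * d k) ∧
  (∀ n, 1 ≤ n → n ≤ N → reflect n (H n) = X * H n)

/-- `r` (restricted to indices `≤ N`) is totally nonnegative. -/
def TotallyNonneg (N : ℕ) (r : ℕ → ℕ → ℝ) : Prop :=
  ∀ (m : ℕ) (rows cols : Fin m → ℕ), StrictMono rows → StrictMono cols →
    (∀ i, rows i ≤ N) → (∀ i, cols i ≤ N) →
    0 ≤ (Matrix.of fun i j => r (rows i) (cols j)).det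

/-- The determinant of the `m × m` submatrix of `r` with rows and columns given by
the first `m` entries of the lists `rows`, `cols`. -/
noncomputable def subDet (r : ℕ → ℕ → ℝ) (rows cols : List ℕ) (m : ℕ) : ℝ :=
  (Matrix.of fun i j : Fin m => r (rows.getD i 0) (cols.getD j 0)).det

/-- `det(R[S∪{n}, {0}∪S])`: rows indexed by `S ∪ {n}` and columns by `{0} ∪ S`,
each in increasing order. -/
noncomputable def minorDet (r : ℕ → ℕ → ℝ) (n : ℕ) (S : Finset ℕ) : ℝ :=
  subDet r (S.sort (· ≤ ·) ++ [n]) (0 :: S.sort (· ≤ ·)) (S.card + 1)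

noncomputable def geom (m : ℕ) : ℝ[X] := ∑ i ∈ Finset.range m, X ^ i

def stab (m : ℕ) : Finset (Finset ℕ) :=
  (Finset.Icc 2 m).powerset.filter (fun S => ∀ i ∈ S, i + 1 ∉ S)

noncomputable def dd (r : ℕ → ℕ → ℝ) : ℕ → ℝ[X]
  | 0 => 1
  | (n+1) => ∑ k ∈ (Finset.range (n+1)).attach,
      C (r (n+1) k.1) * (X * geom (n - k.1)) * dd r k.1
  decreasing_by exact Finset.mem_range.mp k.2

lemma dd_zero (r : ℕ → ℕ → ℝ) : dd r 0 = 1 := by simp [dd]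

lemma dd_eq (r : ℕ → ℕ → ℝ) {n : ℕ} (hn : 1 ≤ n) :
    dd r n = ∑ k ∈ Finset.range n, C (r n k) * (X * geom (n - 1 - k)) * dd r k := by
  obtain ⟨m, rfl⟩ := Nat.exists_eq_add_of_le hn
  rw [show 1 + m = m + 1 by omega, dd]
  rw [← Finset.sum_attach (Finset.range (m+1)) (fun k => C (r (m+1) k) * (X * geom (m + 1 - 1 - k)) * dd r k)]
  simp

lemma geom_succ (m : ℕ) : geom (m + 1) = 1 + X * geom m := by
  simp only [geom, Finset.mul_sum]
  rw [Finset.sum_range_succ']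
  simp [pow_succ, mul_comm, add_comm]

lemma dd_one (r : ℕ → ℕ → ℝ) : dd r 1 = 0 := by
  rw [dd_eq r le_rfl]
  simp [geom]

lemma one_sub_X_mul_geom (m : ℕ) : (1 - X) * geom m = 1 - X ^ m := by
  have := geom_sum_mul (X : ℝ[X]) m
  have h : geom m = ∑ i ∈ Finset.range m, X ^ i := rfl
  rw [h]
  linear_combination -this

lemma geom_rec {a : ℕ} (ha : 2 ≤ a) :
    geom a = (1 + X) * geom (a - 1) - X * geom (a - 2) := by
  obtain ⟨b, rfl⟩ := Nat.exists_eq_add_of_le ha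
  rw [show 2 + b = (b+1)+1 by omega]
  simp only [Nat.add_sub_cancel, show b + 1 + 1 - 2 = b by omega]
  rw [geom_succ, geom_succ]
  ring

lemma mem_stab {m : ℕ} {S : Finset ℕ} :
    S ∈ stab m ↔ S ⊆ Finset.Icc 2 m ∧ ∀ i ∈ S, i + 1 ∉ S := by
  simp [stab]

lemma stab_mono {m m' : ℕ} (h : m ≤ m') : stab m ⊆ stab m' := by
  intro S hS
  rw [mem_stab] at *
  exact ⟨hS.1.trans (Finset.Icc_subset_Icc_right h), hS.2⟩

lemma stab_card_le {m : ℕ} {S : Finset ℕ} (h : S ∈ stab m) : 2 * S.card ≤ m := by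
  rw [mem_stab] at h
  have hdisj : Disjoint S (S.image (· + 1)) := by
    rw [Finset.disjoint_right]
    intro x hx hx'
    obtain ⟨y, hy, rfl⟩ := Finset.mem_image.mp hx
    exact h.2 y hy hx'
  have hsub : S ∪ S.image (· + 1) ⊆ Finset.Icc 2 (m + 1) := by
    intro x hx
    rcases Finset.mem_union.mp hx with hx | hx
    · exact Finset.Icc_subset_Icc_right (Nat.le_succ m) (h.1 hx)
    · obtain ⟨y, hy, rfl⟩ := Finset.mem_image.mp hx
      have := Finset.mem_Icc.mp (h.1 hy)
      exact Finset.mem_Icc.mpr ⟨by omega, by omega⟩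
  have hcard := Finset.card_le_card hsub
  rw [Finset.card_union_of_disjoint hdisj, Finset.card_image_of_injective _ (fun a b => by omega)] at hcard
  simp [Nat.card_Icc] at hcard
  omega

lemma reflect_reflect' (N : ℕ) (p : ℝ[X]) : reflect N (reflect N p) = p := by
  ext i
  simp [coeff_reflect, revAt_invol]

lemma reflect_of_le {p : ℝ[X]} {k n : ℕ} (hk : p.natDegree ≤ k) (hkn : k ≤ n)
    (hpal : reflect k p = p) : reflect n p = X ^ (n - k) * p := by
  have h1 : reflect n (X ^ (n - k) * p) = reflect k p := by
    have := reflect_mul (X ^ (n-k)) p (F := n - k) (G := k)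
      (by simp [natDegree_X_pow]) hk
    rw [show n - k + k = n by omega] at this
    rw [this, reflect_monomial, revAt_le (le_refl (n-k))]
    simp
  rw [hpal] at h1
  calc reflect n p = reflect n (reflect n (X ^ (n-k) * p)) := by rw [h1]
    _ = X ^ (n-k) * p := reflect_reflect' _ _


lemma minorDet_empty (r : ℕ → ℕ → ℝ) (n : ℕ) : minorDet r n ∅ = r n 0 := by
  simp [minorDet, subDet, Matrix.det_fin_one]
  rfl

lemma sort_insert_top {S : Finset ℕ} {m : ℕ} (h : ∀ x ∈ S, x < m) :
    (insert m S).sort (· ≤ ·) = S.sort (· ≤ ·) ++ [m] := by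
  have hm : m ∉ S := fun hm => lt_irrefl m (h m hm)
  refine (fun hp hs => List.Perm.eq_of_pairwise' (Finset.pairwise_sort _ _) hs hp) ?_ ?_
  · refine ((Finset.sort_perm_toList _ _).trans ((Finset.toList_insert hm).trans ?_)).trans
      ((List.perm_append_singleton m _).symm)
    exact ((Finset.sort_perm_toList S (· ≤ ·)).symm.cons m)
  · rw [List.pairwise_append]
    refine ⟨Finset.pairwise_sort _ _, by simp, ?_⟩
    intro a ha b hb
    rw [List.mem_singleton] at hb
    subst hb
    exact le_of_lt (h a (Finset.mem_sort (α := ℕ) (· ≤ ·) |>.mp ha))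

lemma minorDet_insert_top (r : ℕ → ℕ → ℝ) (n m : ℕ) (S : Finset ℕ)
    (hlt : ∀ x ∈ S, x < m) (hz : ∀ x ∈ S, r x m = 0) (hm : r m m = 1) :
    minorDet r n (insert m S) = r n m * minorDet r m S - minorDet r n S := by
  classical
  have hmS : m ∉ S := fun hm' => lt_irrefl m (hlt m hm')
  set L := S.sort (· ≤ ·) with hL
  set c := S.card with hc
  have hlen : L.length = c := Finset.length_sort _
  have hcard : (insert m S).card = c + 1 := by rw [Finset.card_insert_of_notMem hmS]
  have hsort : (insert m S).sort (· ≤ ·) = L ++ [m] := sort_insert_top hlt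
  -- the big matrix
  rw [minorDet, hsort, hcard, subDet]
  set rowsL : List ℕ := (L ++ [m]) ++ [n] with hrows
  set colsL : List ℕ := 0 :: (L ++ [m]) with hcols
  set M : Matrix (Fin (c+1+1)) (Fin (c+1+1)) ℝ :=
    Matrix.of fun i j : Fin (c+1+1) => r (rowsL.getD i 0) (colsL.getD j 0) with hM
  -- getD facts
  have hrow_lt : ∀ i : ℕ, i < c → rowsL.getD i 0 = L.getD i 0 := by
    intro i hi
    rw [hrows, List.append_assoc, List.getD_append _ _ _ _ (by omega)]
  have hrow_c : rowsL.getD c 0 = m := by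
    rw [hrows, List.append_assoc, List.getD_append_right _ _ _ _ (by omega)]
    simp [hlen]
  have hrow_c1 : rowsL.getD (c+1) 0 = n := by
    rw [hrows, List.getD_append_right _ _ _ _ (by simp [hlen])]
    simp [hlen]
  have hcol_le : ∀ j : ℕ, j ≤ c → colsL.getD j 0 = (0 :: L).getD j 0 := by
    intro j hj
    match j with
    | 0 => simp [hcols]
    | (j'+1) =>
      simp only [hcols, List.getD_cons_succ]
      rw [List.getD_append _ _ _ _ (by omega)]
  have hcol_last : colsL.getD (c+1) 0 = m := by
    simp only [hcols, List.getD_cons_succ]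
    rw [List.getD_append_right _ _ _ _ (by omega)]
    simp [hlen]
  -- expand along the last column
  rw [Matrix.det_succ_column M (Fin.last (c+1))]
  rw [Fin.sum_univ_castSucc, Fin.sum_univ_castSucc]
  have hzero : ∀ i : Fin c,
      (-1 : ℝ) ^ ((i.castSucc.castSucc : ℕ) + ((Fin.last (c+1) : Fin (c+2)) : ℕ)) *
        M i.castSucc.castSucc (Fin.last (c+1)) *
        (M.submatrix i.castSucc.castSucc.succAbove (Fin.last (c+1)).succAbove).det = 0 := by
    intro i
    have : M i.castSucc.castSucc (Fin.last (c+1)) = 0 := by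
      show r (rowsL.getD (i : ℕ) 0) (colsL.getD (c+1) 0) = 0
      rw [hcol_last, hrow_lt i i.isLt]
      apply hz
      have hil : (i:ℕ) < L.length := by omega
      rw [List.getD_eq_getElem L 0 hil]
      have := List.getElem_mem hil
      rwa [← Finset.mem_sort (α := ℕ) (· ≤ ·)]
    rw [this]; ring
  rw [Finset.sum_eq_zero (fun i _ => hzero i), zero_add]
  -- remaining two terms
  have hterm2 : M (Fin.last c).castSucc (Fin.last (c+1)) = 1 := by
    show r (rowsL.getD c 0) (colsL.getD (c+1) 0) = 1
    rw [hrow_c, hcol_last, hm]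
  have hterm3 : M (Fin.last (c+1)) (Fin.last (c+1)) = r n m := by
    show r (rowsL.getD (c+1) 0) (colsL.getD (c+1) 0) = r n m
    rw [hrow_c1, hcol_last]
  have hLm : ∀ i : ℕ, i ≤ c → (L ++ [m]).getD i 0 = rowsL.getD i 0 := by
    intro i hi
    rcases Nat.lt_or_ge i c with h | h
    · rw [hrow_lt i h, List.getD_append _ _ _ _ (by omega)]
    · have : i = c := by omega
      subst this
      rw [hrow_c, List.getD_append_right _ _ _ _ (by omega)]
      simp [hlen]
  have hLn : ∀ i : ℕ, i ≤ c → (L ++ [n]).getD i 0 = if i < c then L.getD i 0 else n := by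
    intro i hi
    rcases Nat.lt_or_ge i c with h | h
    · rw [if_pos h, List.getD_append _ _ _ _ (by omega)]
    · have : i = c := by omega
      subst this
      rw [if_neg (by omega), List.getD_append_right _ _ _ _ (by omega)]
      simp [hlen]
  have hsub3 : (M.submatrix (Fin.last (c+1)).succAbove (Fin.last (c+1)).succAbove).det
      = minorDet r m S := by
    rw [minorDet, subDet, ← hL, ← hc]
    congr 1
    ext a b
    simp only [Matrix.submatrix_apply, Fin.succAbove_last, Matrix.of_apply]
    show r (rowsL.getD ((a.castSucc : Fin (c+2)) : ℕ) 0) (colsL.getD ((b.castSucc : Fin (c+2)) : ℕ) 0) = r ((L ++ [m]).getD (a:ℕ) 0) ((0::L).getD (b:ℕ) 0)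
    rw [Fin.coe_castSucc, Fin.coe_castSucc, hcol_le _ (by omega), hLm _ (by omega)]
  have hsub2 : (M.submatrix (Fin.last c).castSucc.succAbove (Fin.last (c+1)).succAbove).det
      = minorDet r n S := by
    rw [minorDet, subDet, ← hL, ← hc]
    congr 1
    ext a b
    simp only [Matrix.submatrix_apply, Fin.succAbove_last, Matrix.of_apply]
    show r (rowsL.getD (((Fin.last c).castSucc.succAbove a :  Fin (c+2)) : ℕ) 0) (colsL.getD ((b.castSucc : Fin (c+2)) : ℕ) 0)
      = r ((L ++ [n]).getD (a:ℕ) 0) ((0::L).getD (b:ℕ) 0)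
    rw [Fin.coe_castSucc, hcol_le _ (by omega), hLn _ (by omega)]
    congr 1
    rcases Nat.lt_or_ge (a : ℕ) c with h | h
    · have hab : ((Fin.last c).castSucc.succAbove a : ℕ) = (a : ℕ) := by
        rw [Fin.succAbove, if_pos (by simp [Fin.lt_def]; omega)]
        simp
      rw [hab, hrow_lt _ h, if_pos h]
    · have ha : (a : ℕ) = c := by omega
      have hab : ((Fin.last c).castSucc.succAbove a : ℕ) = c + 1 := by
        rw [Fin.succAbove, if_neg (by simp [Fin.lt_def]; omega)]
        simp [ha]
      rw [hab, hrow_c1, if_neg (by omega)]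
  rw [hsub2, hsub3, hterm2, hterm3]
  have h1 : ((Fin.last c).castSucc : ℕ) = c := by simp
  have h2 : ((Fin.last (c+1)) : ℕ) = c+1 := by simp
  rw [h1, h2]
  have hpow : (-1 : ℝ) ^ (c + (c+1)) = -1 := by
    rw [show c + (c+1) = 2*c+1 by ring, pow_succ, pow_mul]; simp
  have hpow2 : (-1 : ℝ) ^ ((c+1) + (c+1)) = 1 := by
    rw [show (c+1) + (c+1) = 2*(c+1) by ring, pow_mul]; simp
  rw [hpow, hpow2]; ring

lemma stab_sum_split {m : ℕ} (hm : 2 ≤ m) (f : Finset ℕ → ℝ[X]) :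
    ∑ S ∈ stab m, f S =
      (∑ S ∈ stab (m - 1), f S) + ∑ S ∈ stab (m - 2), f (insert m S) := by
  classical
  rw [← Finset.sum_filter_add_sum_filter_not (stab m) (fun S => m ∉ S) f]
  congr 1
  · apply Finset.sum_congr _ (fun _ _ => rfl)
    ext S
    simp only [Finset.mem_filter, mem_stab]
    constructor
    · rintro ⟨⟨hsub, hst⟩, hnm⟩
      refine ⟨fun x hx => ?_, hst⟩
      have h1 := Finset.mem_Icc.mp (hsub hx)
      have h2 : x ≠ m := fun h => hnm (h ▸ hx)
      exact Finset.mem_Icc.mpr ⟨h1.1, by omega⟩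
    · rintro ⟨hsub, hst⟩
      have h1 : S ⊆ Finset.Icc 2 m := fun x hx => by
        have := Finset.mem_Icc.mp (hsub hx); exact Finset.mem_Icc.mpr ⟨this.1, by omega⟩
      refine ⟨⟨h1, hst⟩, fun hmem => ?_⟩
      have := Finset.mem_Icc.mp (hsub hmem); omega
  · rw [Finset.sum_bij' (fun S _ => S.erase m) (fun S₀ _ => insert m S₀)]
    · intro S hS
      simp only [Finset.mem_filter, mem_stab, not_not] at hS
      obtain ⟨⟨hsub, hst⟩, hmS⟩ := hS
      rw [mem_stab]
      constructor
      · intro x hx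
        have hxS := Finset.mem_of_mem_erase hx
        have hxm := (Finset.mem_erase.mp hx).1
        have hxI := Finset.mem_Icc.mp (hsub hxS)
        have hx1 : x ≠ m - 1 := by
          intro h
          have hxx : x + 1 = m := by omega
          exact hst x hxS (hxx ▸ hmS)
        exact Finset.mem_Icc.mpr ⟨hxI.1, by omega⟩
      · intro i hi hcon
        exact hst i (Finset.mem_of_mem_erase hi) (Finset.mem_of_mem_erase hcon)
    · intro S₀ hS₀
      rw [mem_stab] at hS₀
      obtain ⟨hsub, hst⟩ := hS₀
      simp only [Finset.mem_filter, mem_stab, not_not]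
      refine ⟨⟨?_, ?_⟩, Finset.mem_insert_self m S₀⟩
      · intro x hx
        rcases Finset.mem_insert.mp hx with rfl | hx
        · exact Finset.mem_Icc.mpr ⟨hm, le_rfl⟩
        · have := Finset.mem_Icc.mp (hsub hx); exact Finset.mem_Icc.mpr ⟨this.1, by omega⟩
      · intro i hi hcon
        rcases Finset.mem_insert.mp hi with rfl | hi
        · rcases Finset.mem_insert.mp hcon with h | h
          · omega
          · have := Finset.mem_Icc.mp (hsub h); omega
        · have hii := Finset.mem_Icc.mp (hsub hi)
          rcases Finset.mem_insert.mp hcon with h | h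
          · omega
          · exact hst i hi h
    · intro S hS
      simp only [Finset.mem_filter, not_not] at hS
      exact Finset.insert_erase hS.2
    · intro S₀ hS₀
      rw [mem_stab] at hS₀
      have hmnot : m ∉ S₀ := fun h => by have := Finset.mem_Icc.mp (hS₀.1 h); omega
      exact Finset.erase_insert hmnot
    · intro S hS
      simp only [Finset.mem_filter, not_not] at hS
      rw [Finset.insert_erase hS.2]

lemma geom_zero : geom 0 = 0 := by simp [geom]
lemma geom_one : geom 1 = 1 := by simp [geom]
lemma geom_two : geom 2 = 1 + X := by rw [show (2:ℕ) = 1+1 from rfl, geom_succ, geom_one]; ring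

lemma stab_of_le_one {m : ℕ} (hm : m ≤ 1) : stab m = {∅} := by
  ext S
  simp only [stab, Finset.mem_filter, Finset.mem_powerset, Finset.mem_singleton]
  constructor
  · rintro ⟨hsub, -⟩
    have : Finset.Icc 2 m = ∅ := by
      apply Finset.Icc_eq_empty; omega
    rw [this, Finset.subset_empty] at hsub
    exact hsub
  · rintro rfl
    simp

lemma keyP (N : ℕ) (r : ℕ → ℕ → ℝ)
    (htri : ∀ n k, n < k → r n k = 0) (hdiag : ∀ n ≤ N, r n n = 1) :
    ∀ n, 1 ≤ n → n ≤ N → ∀ b, b ≤ n - 1 →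
    ∑ k ∈ Finset.range n, C (r n k) * (X ^ b * geom (n - b - k)) * dd r k
      = ∑ S ∈ stab (n - 1 - b),
          C (minorDet r n S) * (X ^ (S.card + b) * (1 + X) ^ (n - 1 - b - 2 * S.card)) := by
  intro n
  induction n using Nat.strong_induction_on with
  | _ n ihn =>
  intro hn1 hnN
  have main : ∀ m : ℕ, ∀ b, b ≤ n - 1 → n - 1 - b = m →
      ∑ k ∈ Finset.range n, C (r n k) * (X ^ b * geom (n - b - k)) * dd r k
        = ∑ S ∈ stab (n - 1 - b),
            C (minorDet r n S) * (X ^ (S.card + b) * (1 + X) ^ (n - 1 - b - 2 * S.card)) := by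
    intro m
    induction m using Nat.strong_induction_on with
    | _ m ihm =>
    intro b hb hm
    rcases Nat.lt_or_ge m 2 with hm2 | hm2
    · -- base cases m = 0, 1
      have hsingle : stab (n - 1 - b) = {∅} := by rw [hm]; exact stab_of_le_one (by omega)
      rw [hsingle, Finset.sum_singleton, minorDet_empty]
      simp only [Finset.card_empty, Nat.zero_add, Nat.mul_zero, Nat.sub_zero, hm]
      rw [Finset.sum_eq_single 0]
      · rcases Nat.eq_or_lt_of_le hm2 with h1 | h1
        · -- m = 1 : b = n - 2
          have hnb : n - b = 2 := by omega
          rw [hnb, dd_zero, geom_two, show m = 1 by omega, pow_one]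
          ring
        · -- m = 0 : b = n - 1
          have hnb : n - b = 1 := by omega
          rw [hnb, dd_zero, geom_one, show m = 0 by omega, pow_zero]
          ring
      · intro k hk hk0
        rcases Nat.eq_or_lt_of_le hm2 with h1 | h1
        · -- m = 1: k = 1 gives dd = 0, k ≥ 2 gives geom 0
          rcases Nat.eq_or_lt_of_le (Nat.one_le_iff_ne_zero.mpr hk0) with h2 | h2
          · rw [← h2, dd_one]; ring
          · rw [show n - b - k = 0 by omega, geom_zero]; ring
        · rw [show n - b - k = 0 by omega, geom_zero]; ring
      · intro h
        exact absurd (Finset.mem_range.mpr (by omega)) h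
    · -- inductive step: m ≥ 2
      have hmN : m ≤ N := by omega
      have hmn : m < n := by omega
      have hbm : b = n - 1 - m := by omega
      -- abbreviations
      set L0 : ℝ[X] := ∑ k ∈ Finset.range n, C (r n k) * (X ^ b * geom (n - b - k)) * dd r k with hL0
      have hIH1 : ∑ k ∈ Finset.range n, C (r n k) * (X ^ (b+1) * geom (n - (b+1) - k)) * dd r k
          = ∑ S ∈ stab (n - 1 - (b+1)),
              C (minorDet r n S) * (X ^ (S.card + (b+1)) * (1 + X) ^ (n - 1 - (b+1) - 2 * S.card)) :=
        ihm (m-1) (by omega) (b+1) (by omega) (by omega)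
      have hIH2 : ∑ k ∈ Finset.range n, C (r n k) * (X ^ (b+2) * geom (n - (b+2) - k)) * dd r k
          = ∑ S ∈ stab (n - 1 - (b+2)),
              C (minorDet r n S) * (X ^ (S.card + (b+2)) * (1 + X) ^ (n - 1 - (b+2) - 2 * S.card)) :=
        ihm (m-2) (by omega) (b+2) (by omega) (by omega)
      have hPm : dd r m = ∑ S ∈ stab (m - 1 - 1),
          C (minorDet r m S) * (X ^ (S.card + 1) * (1 + X) ^ (m - 1 - 1 - 2 * S.card)) := by
        have := ihn m hmn (by omega) hmN 1 (by omega)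
        rw [← this, dd_eq r (by omega)]
        apply Finset.sum_congr rfl
        intro k hk
        rw [pow_one]
      -- the LHS recursion
      have hLrec : X * (∑ k ∈ Finset.range n, C (r n k) * (X ^ b * geom (n - b - k)) * dd r k)
          = (1 + X) * (∑ k ∈ Finset.range n, C (r n k) * (X ^ (b+1) * geom (n - (b+1) - k)) * dd r k)
            - (∑ k ∈ Finset.range n, C (r n k) * (X ^ (b+2) * geom (n - (b+2) - k)) * dd r k)
            + C (r n m) * X ^ (b+1) * dd r m := by
        rw [Finset.mul_sum, Finset.mul_sum]
        rw [← Finset.sum_sub_distrib]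
        have hifsum : C (r n m) * X ^ (b+1) * dd r m
            = ∑ k ∈ Finset.range n, (if k = m then C (r n k) * X ^ (b+1) * dd r k else 0) := by
          rw [Finset.sum_ite_eq' (Finset.range n) m (fun k => C (r n k) * X ^ (b+1) * dd r k)]
          rw [if_pos (Finset.mem_range.mpr hmn)]
        rw [hifsum, ← Finset.sum_add_distrib]
        apply Finset.sum_congr rfl
        intro k hk
        rcases Nat.lt_or_ge (n - b - k) 1 with ha | ha
        · -- a = 0
          rw [show n - b - k = 0 by omega, show n - (b+1) - k = 0 by omega,
            show n - (b+2) - k = 0 by omega, geom_zero, if_neg (by omega)]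
          ring
        · rcases Nat.lt_or_ge (n - b - k) 2 with ha2 | ha2
          · -- a = 1, k = n - 1 - b = m
            rw [show n - b - k = 1 by omega, show n - (b+1) - k = 0 by omega,
              show n - (b+2) - k = 0 by omega, geom_one, geom_zero, if_pos (by omega)]
            ring
          · -- a ≥ 2
            have hk2 : k ≠ m := by omega
            rw [if_neg hk2, geom_rec ha2, show n - b - k - 1 = n - (b+1) - k by omega,
              show n - b - k - 2 = n - (b+2) - k by omega]
            ring
      -- the RHS recursion
      have hRrec : X * (∑ S ∈ stab (n - 1 - b),
            C (minorDet r n S) * (X ^ (S.card + b) * (1 + X) ^ (n - 1 - b - 2 * S.card)))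
          = (1 + X) * (∑ S ∈ stab (n - 1 - (b+1)),
              C (minorDet r n S) * (X ^ (S.card + (b+1)) * (1 + X) ^ (n - 1 - (b+1) - 2 * S.card)))
            - (∑ S ∈ stab (n - 1 - (b+2)),
              C (minorDet r n S) * (X ^ (S.card + (b+2)) * (1 + X) ^ (n - 1 - (b+2) - 2 * S.card)))
            + C (r n m) * X ^ (b+1) * dd r m := by
        rw [hm, stab_sum_split hm2]
        rw [mul_add]
        have hch1 : X * (∑ S ∈ stab (m-1),
              C (minorDet r n S) * (X ^ (S.card + b) * (1 + X) ^ (m - 2 * S.card)))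
            = (1 + X) * (∑ S ∈ stab (n - 1 - (b+1)),
              C (minorDet r n S) * (X ^ (S.card + (b+1)) * (1 + X) ^ (n - 1 - (b+1) - 2 * S.card))) := by
          rw [show n - 1 - (b+1) = m - 1 by omega, Finset.mul_sum, Finset.mul_sum]
          apply Finset.sum_congr rfl
          intro S hS
          have hc := stab_card_le hS
          rw [show m - 2 * S.card = (n - 1 - (b+1) - 2 * S.card) + 1 by omega,
            show S.card + (b+1) = (S.card + b) + 1 by omega]
          rw [show n - 1 - (b+1) - 2*S.card = m - 1 - 2*S.card by omega]
          ring
        rw [hch1]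
        have hch2 : X * (∑ S ∈ stab (m-2),
              C (minorDet r n (insert m S)) * (X ^ ((insert m S).card + b) * (1 + X) ^ (m - 2 * (insert m S).card)))
            = C (r n m) * X ^ (b+1) * dd r m
              - (∑ S ∈ stab (n - 1 - (b+2)),
                C (minorDet r n S) * (X ^ (S.card + (b+2)) * (1 + X) ^ (n - 1 - (b+2) - 2 * S.card))) := by
          rw [show n - 1 - (b+2) = m - 2 by omega]
          rw [hPm, show m - 1 - 1 = m - 2 by omega, Finset.mul_sum, Finset.mul_sum, ← Finset.sum_sub_distrib]
          apply Finset.sum_congr rfl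
          intro S hS
          have hc := stab_card_le hS
          have hSm : S ∈ stab m := by
            rw [mem_stab] at hS ⊢
            exact ⟨hS.1.trans (Finset.Icc_subset_Icc_right (by omega)), hS.2⟩
          have hsub : S ⊆ Finset.Icc 2 (m-2) := (mem_stab.mp hS).1
          have hlt : ∀ x ∈ S, x < m := fun x hx => by
            have := Finset.mem_Icc.mp (hsub hx); omega
          have hmns : m ∉ S := fun h => lt_irrefl m (hlt m h)
          rw [Finset.card_insert_of_notMem hmns]
          rw [minorDet_insert_top r n m S hlt (fun x hx => htri x m (hlt x hx)) (hdiag m hmN)]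
          rw [show m - 2 * (S.card + 1) = m - 2 - 2 * S.card by omega]
          push_cast [map_sub, map_mul]
          ring
        rw [hch2]
        ring
      -- combine
      have hX : (X : ℝ[X]) ≠ 0 := Polynomial.X_ne_zero
      apply mul_left_cancel₀ hX
      rw [hLrec, hRrec, hIH1, hIH2]
  intro b hb
  exact main (n - 1 - b) b hb rfl

lemma reflect_finset_sum {ι : Type*} (s : Finset ι) (f : ι → ℝ[X]) (N : ℕ) :
    reflect N (∑ i ∈ s, f i) = ∑ i ∈ s, reflect N (f i) := by
  classical
  induction s using Finset.cons_induction with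
  | empty => simp [reflect_zero]
  | cons a s ha ih => rw [Finset.sum_cons, Finset.sum_cons, reflect_add, ih]

lemma one_sub_X_ne_zero : (1 : ℝ[X]) - X ≠ 0 := by
  intro h
  have := congrArg (eval 0) h
  simp at this

lemma d_eq_dd (N : ℕ) (r : ℕ → ℕ → ℝ) (hdiag : ∀ n ≤ N, r n n = 1)
    (d H : ℕ → ℝ[X]) (hdH : ChowFamily N r d H) :
    ∀ n ≤ N, d n = dd r n := by
  obtain ⟨hd0, hdeg, hpal, hHdef, hHrefl⟩ := hdH
  intro n
  induction n using Nat.strong_induction_on with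
  | _ n ihn =>
  intro hnN
  rcases Nat.eq_zero_or_pos n with rfl | hn1
  · rw [hd0, dd_zero]
  · have hrefl := hHrefl n hn1 hnN
    rw [hHdef n hnN, reflect_finset_sum] at hrefl
    have hterm : ∀ k ∈ Finset.range (n+1), reflect n (C (r n k) * d k)
        = C (r n k) * (X ^ (n - k) * d k) := by
      intro k hk
      have hkn : k ≤ n := by have := Finset.mem_range.mp hk; omega
      rw [reflect_C_mul, reflect_of_le (hdeg k (le_trans hkn hnN)) hkn (hpal k (le_trans hkn hnN))]
    rw [Finset.sum_congr rfl hterm] at hrefl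
    -- hrefl : ∑ k ∈ range (n+1), C (r n k) * (X^(n-k) * d k) = X * ∑ k ∈ range (n+1), C (r n k) * d k
    rw [Finset.sum_range_succ, Finset.mul_sum, Finset.sum_range_succ] at hrefl
    rw [hdiag n hnN] at hrefl
    simp only [Nat.sub_self, pow_zero, one_mul, map_one] at hrefl
    have hsplit : ∑ k ∈ Finset.range n, C (r n k) * ((X - X ^ (n - k)) * d k)
        = (∑ k ∈ Finset.range n, X * (C (r n k) * d k))
          - ∑ k ∈ Finset.range n, C (r n k) * (X ^ (n - k) * d k) := by
      rw [← Finset.sum_sub_distrib]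
      apply Finset.sum_congr rfl
      intro k hk
      ring
    have key : (1 - X) * d n = ∑ k ∈ Finset.range n, C (r n k) * ((X - X ^ (n - k)) * d k) := by
      rw [hsplit]
      linear_combination hrefl
    have keydd : (1 - X) * dd r n
        = ∑ k ∈ Finset.range n, C (r n k) * ((X - X ^ (n - k)) * dd r k) := by
      rw [dd_eq r hn1, Finset.mul_sum]
      apply Finset.sum_congr rfl
      intro k hk
      have hkn : k < n := Finset.mem_range.mp hk
      have hg := one_sub_X_mul_geom (n - 1 - k)
      rw [show n - k = (n - 1 - k) + 1 by omega, pow_succ]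
      linear_combination (C (r n k) * X * dd r k) * hg
    have hsame : ∑ k ∈ Finset.range n, C (r n k) * ((X - X ^ (n - k)) * d k)
        = ∑ k ∈ Finset.range n, C (r n k) * ((X - X ^ (n - k)) * dd r k) := by
      apply Finset.sum_congr rfl
      intro k hk
      have hkn := Finset.mem_range.mp hk
      rw [ihn k hkn (by omega)]
    apply mul_left_cancel₀ one_sub_X_ne_zero
    rw [key, keydd, hsame]

lemma filt_eq (n : ℕ) :
    (Finset.Icc 1 (n - 1)).powerset.filter
      (fun S => ∀ i ∈ insert 0 S, i + 1 ∉ insert 0 S) = stab (n - 1) := by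
  classical
  ext S
  simp only [Finset.mem_filter, Finset.mem_powerset, mem_stab]
  constructor
  · rintro ⟨hsub, hst⟩
    have h1 : (1 : ℕ) ∉ S := by
      intro h
      exact hst 0 (Finset.mem_insert_self 0 S) (Finset.mem_insert_of_mem h)
    constructor
    · intro x hx
      have := Finset.mem_Icc.mp (hsub hx)
      have : x ≠ 1 := fun h => h1 (h ▸ hx)
      have h2 := Finset.mem_Icc.mp (hsub hx)
      exact Finset.mem_Icc.mpr ⟨by omega, h2.2⟩
    · intro i hi hcon
      exact hst i (Finset.mem_insert_of_mem hi) (Finset.mem_insert_of_mem hcon)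
  · rintro ⟨hsub, hst⟩
    constructor
    · intro x hx
      have := Finset.mem_Icc.mp (hsub hx)
      exact Finset.mem_Icc.mpr ⟨by omega, this.2⟩
    · intro i hi hcon
      rcases Finset.mem_insert.mp hi with rfl | hi
      · rcases Finset.mem_insert.mp hcon with h | h
        · omega
        · have := Finset.mem_Icc.mp (hsub h); omega
      · rcases Finset.mem_insert.mp hcon with h | h
        · omega
        · exact hst i hi h

lemma sorted_lt_getD_strictMono {L : List ℕ} (h : List.Pairwise (· < ·) L)
    {len : ℕ} (hlen : len = L.length) :
    StrictMono (fun i : Fin len => L.getD (i : ℕ) 0) := by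
  intro i j hij
  show L.getD (i : ℕ) 0 < L.getD (j : ℕ) 0
  have hi : (i : ℕ) < L.length := by omega
  have hj : (j : ℕ) < L.length := by omega
  rw [List.getD_eq_getElem L 0 hi, List.getD_eq_getElem L 0 hj]
  exact List.pairwise_iff_getElem.mp h _ _ hi hj hij

lemma minorDet_nonneg (N : ℕ) (r : ℕ → ℕ → ℝ) (hTN : TotallyNonneg N r)
    {n : ℕ} (hnN : n ≤ N) {S : Finset ℕ} (hS : S ∈ stab (n - 1)) :
    0 ≤ minorDet r n S := by
  classical
  obtain ⟨hsub, hst⟩ := mem_stab.mp hS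
  set L := S.sort (· ≤ ·) with hL
  have hmemL : ∀ x ∈ L, x ∈ S := fun x hx => (Finset.mem_sort (α := ℕ) (· ≤ ·)).mp hx
  have hlenL : L.length = S.card := Finset.length_sort _
  have hsorted : List.Pairwise (· < ·) L := (Finset.sortedLT_sort S).pairwise
  have hbound : ∀ x ∈ L, 2 ≤ x ∧ x ≤ n - 1 := fun x hx =>
    Finset.mem_Icc.mp (hsub (hmemL x hx))
  -- rows
  have hrows_sorted : List.Pairwise (· < ·) (L ++ [n]) := by
    rw [List.pairwise_append]
    refine ⟨hsorted, by simp, ?_⟩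
    intro a ha b hb
    rw [List.mem_singleton] at hb
    subst hb
    have := hbound a ha
    omega
  have hcols_sorted : List.Pairwise (· < ·) (0 :: L) := by
    rw [List.pairwise_cons]
    exact ⟨fun a ha => by have := hbound a ha; omega, hsorted⟩
  have hrow_mono := sorted_lt_getD_strictMono hrows_sorted
    (len := S.card + 1) (by simp [hlenL])
  have hcol_mono := sorted_lt_getD_strictMono hcols_sorted
    (len := S.card + 1) (by simp [hlenL])
  have hrow_le : ∀ i : Fin (S.card + 1), (L ++ [n]).getD (i : ℕ) 0 ≤ N := by
    intro i
    have hi : (i : ℕ) < (L ++ [n]).length := by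
      have : (L ++ [n]).length = S.card + 1 := by simp [hlenL]
      omega
    rw [List.getD_eq_getElem _ 0 hi]
    have hmem := List.getElem_mem hi
    rcases List.mem_append.mp hmem with h | h
    · have := hbound _ h; omega
    · rw [List.mem_singleton] at h; omega
  have hcol_le : ∀ i : Fin (S.card + 1), ((0 :: L)).getD (i : ℕ) 0 ≤ N := by
    intro i
    have hi : (i : ℕ) < ((0 :: L)).length := by
      have : ((0 :: L)).length = S.card + 1 := by simp [hlenL]
      omega
    rw [List.getD_eq_getElem _ 0 hi]
    have hmem := List.getElem_mem hi
    rcases List.mem_cons.mp hmem with h | h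
    · omega
    · have := hbound _ h; omega
  have := hTN (S.card + 1) (fun i => (L ++ [n]).getD (i : ℕ) 0)
    (fun i => ((0 :: L)).getD (i : ℕ) 0) hrow_mono hcol_mono hrow_le hcol_le
  exact this

/-- `γ(Hₙ[R]) = Σ_{S ⊆ [n-1], S∪{0} stable} det(R[S∪{n},{0}∪S]) t^{|S|}` (expanded
in the basis `tᵏ(1+t)^{n-1-2k}`); in particular if `R` is totally nonnegative, the
γ-polynomial of `Hₙ[R]` has nonnegative coefficients. -/
theorem stmt13 (N : ℕ) (r : ℕ → ℕ → ℝ)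
    (htri : ∀ n k, n < k → r n k = 0) (hdiag : ∀ n ≤ N, r n n = 1)
    (d H : ℕ → ℝ[X]) (hdH : ChowFamily N r d H) :
    (∀ n ≤ N, H n =
      ∑ S ∈ (Finset.Icc 1 (n - 1)).powerset.filter
          (fun S => ∀ i ∈ insert 0 S, i + 1 ∉ insert 0 S),
        C (minorDet r n S) * (X ^ S.card * (1 + X) ^ (n - 1 - 2 * S.card))) ∧
    (TotallyNonneg N r → ∀ n ≤ N, ∀ i : ℕ,
      0 ≤ (∑ S ∈ (Finset.Icc 1 (n - 1)).powerset.filter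
          (fun S => ∀ i ∈ insert 0 S, i + 1 ∉ insert 0 S),
        C (minorDet r n S) * X ^ S.card).coeff i) := by
  have hdd := d_eq_dd N r hdiag d H hdH
  obtain ⟨hd0, hdeg, hpal, hHdef, hHrefl⟩ := hdH
  constructor
  · intro n hnN
    rw [filt_eq]
    rcases Nat.eq_zero_or_pos n with rfl | hn1
    · rw [hHdef 0 (by omega)]
      rw [show (0:ℕ) - 1 = 0 from rfl, stab_of_le_one (by omega), Finset.sum_singleton,
        minorDet_empty, hdiag 0 hnN, Finset.sum_range_one, hdiag 0 hnN, hd0]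
      simp
    · have hkey := keyP N r htri hdiag n hn1 hnN 0 (by omega)
      have hHn : H n = ∑ k ∈ Finset.range n, C (r n k) * (X ^ 0 * geom (n - 0 - k)) * dd r k := by
        rw [hHdef n hnN, Finset.sum_range_succ, hdiag n hnN, hdd n hnN, dd_eq r hn1, map_one, one_mul]
        rw [← Finset.sum_add_distrib]
        apply Finset.sum_congr rfl
        intro k hk
        have hkn := Finset.mem_range.mp hk
        rw [hdd k (by omega)]
        rw [show n - 0 - k = (n - 1 - k) + 1 by omega, geom_succ, pow_zero, one_mul]
        ring
      rw [hHn, hkey]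
      apply Finset.sum_congr (by rw [Nat.sub_zero])
      intro S hS
      rw [Nat.add_zero, Nat.sub_zero]
  · intro hTN n hnN i
    rw [filt_eq, Polynomial.finset_sum_coeff]
    apply Finset.sum_nonneg
    intro S hS
    rw [Polynomial.coeff_C_mul, Polynomial.coeff_X_pow]
    have := minorDet_nonneg N r hTN hnN hS
    positivity
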